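/- Let t : G → U be a surjective homomorphism of torsion-free abelian groups, with G of finite rank and U = ℤ[1/p] for some prime p. If G contains a noncyclic rank-one subgroup H with H ∩ ker t = {0}, then the extension 0 → ker t → G → U → 0 is nearly split: ker t ⊕ H has finite index in G. -/

import Mathlib

open TensorProduct

/-- The subgroup ℤ[1/p] of ℚ. -/
def zOneOver (p : ℕ) : AddSubgroup ℚ :=
  AddSubgroup.closure {x : ℚ | ∃ n : ℕ, x = 1 / (p : ℚ) ^ n}

/-- A subgroup is rank one: nonzero, and any two nonzero elements are rationally dependent. -/
def IsRankOne {J : Type*} [AddCommGroup J] (H : AddSubgroup J) : Prop :=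
  H ≠ ⊥ ∧ ∀ a ∈ H, ∀ b ∈ H, a ≠ 0 → b ≠ 0 → ∃ m n : ℤ, m ≠ 0 ∧ m • a = n • b

lemma mem_zOneOver {p : ℕ} (hp : p ≠ 0) {x : ℚ} :
    x ∈ zOneOver p ↔ ∃ (a : ℤ) (n : ℕ), x = a / (p : ℚ) ^ n := by
  have hp0 : (p : ℚ) ≠ 0 := Nat.cast_ne_zero.mpr hp
  constructor
  · intro hx
    induction hx using AddSubgroup.closure_induction with
    | mem x hx => obtain ⟨n, rfl⟩ := hx; exact ⟨1, n, by push_cast; ring⟩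
    | zero => exact ⟨0, 0, by norm_num⟩
    | add a b _ _ ha hb =>
        obtain ⟨a1, m, rfl⟩ := ha
        obtain ⟨b1, n, rfl⟩ := hb
        refine ⟨a1 * p ^ n + b1 * p ^ m, m + n, ?_⟩
        push_cast
        field_simp
        rw [pow_add]
        ring
    | neg a _ ha =>
        obtain ⟨a1, m, rfl⟩ := ha
        exact ⟨-a1, m, by push_cast; ring⟩
  · rintro ⟨a, n, rfl⟩
    have h1 : (1 : ℚ) / p ^ n ∈ zOneOver p :=
      AddSubgroup.subset_closure ⟨n, rfl⟩
    have := AddSubgroup.zsmul_mem _ h1 a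
    simpa [zsmul_eq_mul, div_eq_mul_inv, mul_comm] using this

lemma coprime_int {p : ℕ} (hp : p.Prime) {c : ℤ} (h : ¬ (p : ℤ) ∣ c) (n : ℕ) :
    IsCoprime c ((p : ℤ) ^ n) := by
  apply IsCoprime.pow_right
  rw [Int.isCoprime_iff_gcd_eq_one, Int.gcd, Int.natAbs_natCast]
  exact Nat.coprime_comm.mp (hp.coprime_iff_not_dvd.mpr (fun hd => h (Int.natCast_dvd.mpr hd)))

lemma exists_good {p : ℕ} (hp : p.Prime) (A : AddSubgroup ℚ) (hA : A ≤ zOneOver p)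
    (hnc : ¬ ∃ x : ℚ, A = AddSubgroup.closure {x}) (N : ℕ) :
    ∃ c : ℤ, ¬ (p : ℤ) ∣ c ∧ (c : ℚ) / (p : ℚ) ^ N ∈ A := by
  have hp0 : (p : ℚ) ≠ 0 := Nat.cast_ne_zero.mpr hp.ne_zero
  have hnb : ∃ a ∈ A, a ∉ AddSubgroup.zmultiples ((1 : ℚ) / (p : ℚ) ^ N) := by
    by_contra hb
    push_neg at hb
    apply hnc
    set g : ℤ →+ ℚ := zmultiplesHom ℚ ((1 : ℚ) / (p : ℚ) ^ N) with hg
    obtain ⟨d, hd⟩ := Int.subgroup_cyclic (A.comap g)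
    refine ⟨g d, ?_⟩
    have heq : A = (A.comap g).map g := by
      apply le_antisymm
      · intro a ha
        obtain ⟨k, hk⟩ := hb a ha
        have hgk : g k = a := hk
        exact ⟨k, AddSubgroup.mem_comap.mpr (by rw [hgk]; exact ha), hgk⟩
      · rintro a ⟨k, hk, rfl⟩
        exact hk
    rw [heq, hd, AddMonoidHom.map_closure]
    simp
  obtain ⟨a, haA, hnm⟩ := hnb
  obtain ⟨b0, n0, hb0⟩ := (mem_zOneOver hp.ne_zero).mp (hA haA)
  have hex : ∃ n : ℕ, ∃ b : ℤ, a = b / (p : ℚ) ^ n := ⟨n0, b0, hb0⟩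
  classical
  obtain ⟨n, ⟨b, hb⟩, hmin⟩ :
      ∃ n, (∃ b : ℤ, a = b / (p : ℚ) ^ n) ∧ ∀ m < n, ¬ ∃ b : ℤ, a = b / (p : ℚ) ^ m :=
    ⟨Nat.find hex, Nat.find_spec hex, fun m hm => Nat.find_min hex hm⟩
  have hgt : N < n := by
    by_contra hle
    push_neg at hle
    obtain ⟨k, rfl⟩ : ∃ k, N = n + k := ⟨N - n, by omega⟩
    apply hnm
    refine ⟨b * (p : ℤ) ^ k, ?_⟩
    rw [hb]
    simp only [zsmul_eq_mul]
    push_cast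
    rw [pow_add]
    field_simp
  have hpb : ¬ (p : ℤ) ∣ b := by
    rintro ⟨b', rfl⟩
    obtain ⟨m, rfl⟩ : ∃ m, n = m + 1 := ⟨n - 1, by omega⟩
    refine hmin m (by omega) ⟨b', ?_⟩
    rw [hb]
    push_cast
    rw [pow_succ]
    field_simp
  refine ⟨b, hpb, ?_⟩
  obtain ⟨k, rfl⟩ : ∃ k, n = N + k := ⟨n - N, by omega⟩
  have : (b : ℚ) / (p : ℚ) ^ N = (p : ℤ) ^ k • a := by
    rw [hb]
    simp only [zsmul_eq_mul]
    push_cast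
    rw [pow_add]
    field_simp
  rw [this]
  exact AddSubgroup.zsmul_mem A haA _

lemma key_relindex {p : ℕ} (hp : p.Prime) (A : AddSubgroup ℚ) (hA : A ≤ zOneOver p)
    (hnc : ¬ ∃ x : ℚ, A = AddSubgroup.closure {x}) :
    A.relIndex (zOneOver p) ≠ 0 := by
  have hp0 : (p : ℚ) ≠ 0 := Nat.cast_ne_zero.mpr hp.ne_zero
  obtain ⟨c₀, hpc₀, hc₀⟩ := exists_good hp A hA hnc 0
  simp only [pow_zero, div_one] at hc₀
  have hc₀0 : c₀ ≠ 0 := fun h => hpc₀ (h ▸ dvd_zero _)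
  have step3 : ∀ n : ℕ, (c₀ : ℚ) / (p : ℚ) ^ n ∈ A := by
    intro n
    obtain ⟨c, hpc, hc⟩ := exists_good hp A hA hnc n
    obtain ⟨u, v, huv⟩ := coprime_int hp hpc n
    have harith : (c₀ : ℚ) / (p : ℚ) ^ n
        = (u * c₀) • ((c : ℚ) / (p : ℚ) ^ n) + v • (c₀ : ℚ) := by
      simp only [zsmul_eq_mul]
      have h1 : ((u * c + v * (p : ℤ) ^ n : ℤ) : ℚ) = 1 := by rw [huv]; norm_num
      push_cast at h1
      have h2 : (c₀ : ℚ) = u * c₀ * c + v * c₀ * (p : ℚ) ^ n := by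
        linear_combination (-(c₀ : ℚ)) * h1
      push_cast
      calc (c₀ : ℚ) / (p : ℚ) ^ n = (u * c₀ * c + v * c₀ * (p : ℚ) ^ n) / (p : ℚ) ^ n := by
            rw [← h2]
        _ = u * c₀ * ((c : ℚ) / (p : ℚ) ^ n) + v * c₀ := by
            rw [add_div, mul_div_assoc, mul_div_assoc, div_self (pow_ne_zero n hp0), mul_one]
    rw [harith]
    exact AddSubgroup.add_mem A (AddSubgroup.zsmul_mem A hc _) (AddSubgroup.zsmul_mem A hc₀ _)
  set U := zOneOver p with hU
  have h1U : (1 : ℚ) ∈ U := AddSubgroup.subset_closure ⟨0, by norm_num⟩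
  set A' := A.addSubgroupOf U with hA'
  set q : U →+ U ⧸ A' := QuotientAddGroup.mk' A' with hq
  set one : U := ⟨1, h1U⟩ with hone
  set φ : ℤ →+ U ⧸ A' := (zmultiplesHom (U ⧸ A')) (q one) with hφ
  have hφk : ∀ k : ℤ, φ k = q (k • one) := by
    intro k; simp [hφ, hq]
  have hmemA : ((c₀.natAbs : ℤ) : ℚ) ∈ A := by
    rcases Int.natAbs_eq c₀ with h | h
    · rw [← h]; exact hc₀
    · have : ((c₀.natAbs : ℤ) : ℚ) = -(c₀ : ℚ) := by
        rw [show ((c₀.natAbs : ℤ)) = -c₀ from by omega]; push_cast; ring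
      rw [this]; exact AddSubgroup.neg_mem A hc₀
  have hker : φ ((c₀.natAbs : ℤ)) = 0 := by
    rw [hφk, hq, QuotientAddGroup.mk'_apply, QuotientAddGroup.eq_zero_iff,
      hA', AddSubgroup.mem_addSubgroupOf]
    have : (((c₀.natAbs : ℤ) • one : U) : ℚ) = ((c₀.natAbs : ℤ) : ℚ) := by
      simp [hone]
    rw [this]
    exact hmemA
  have hsurj : Function.Surjective φ := by
    intro x
    induction x using QuotientAddGroup.induction_on with
    | H z =>
      obtain ⟨a, n, hz⟩ := (mem_zOneOver hp.ne_zero).mp z.2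
      obtain ⟨u, v, huv⟩ := coprime_int hp hpc₀ n
      refine ⟨a * v, ?_⟩
      rw [hφk]
      have hmem : z - (a * v) • one ∈ A' := by
        rw [hA', AddSubgroup.mem_addSubgroupOf]
        have hco : ((z - (a * v) • one : U) : ℚ) = (a * u) • ((c₀ : ℚ) / (p : ℚ) ^ n) := by
          push_cast [hone]
          rw [hz]
          simp only [zsmul_eq_mul]
          have h1 : ((u * c₀ + v * (p : ℤ) ^ n : ℤ) : ℚ) = 1 := by rw [huv]; norm_num
          push_cast at h1
          have h2 : (a : ℚ) = a * u * c₀ + a * v * (p : ℚ) ^ n := by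
            linear_combination (-(a : ℚ)) * h1
          push_cast
          calc (a : ℚ) / (p : ℚ) ^ n - a * v * 1
              = (a * u * c₀ + a * v * (p : ℚ) ^ n) / (p : ℚ) ^ n - a * v := by
                rw [← h2]; ring
            _ = a * u * ((c₀ : ℚ) / (p : ℚ) ^ n) := by
                rw [add_div, mul_div_assoc, mul_div_assoc, div_self (pow_ne_zero n hp0), mul_one]
                ring
        rw [hco]
        exact AddSubgroup.zsmul_mem A (step3 n) _
      have heq : q ((a * v) • one) = QuotientAddGroup.mk' A' z :=
        (QuotientAddGroup.mk'_eq_mk' A').mpr ⟨z - (a * v) • one, hmem, by abel⟩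
      exact heq
  haveI : NeZero c₀.natAbs := ⟨Int.natAbs_ne_zero.mpr hc₀0⟩
  set ψ : ZMod c₀.natAbs →+ U ⧸ A' := ZMod.lift c₀.natAbs ⟨φ, hker⟩ with hψ
  have hψs : Function.Surjective ψ := by
    intro x
    obtain ⟨k, hk⟩ := hsurj x
    refine ⟨(k : ZMod c₀.natAbs), ?_⟩
    rw [hψ]
    simpa using hk
  haveI : Finite (U ⧸ A') := Finite.of_surjective ψ hψs
  exact AddSubgroup.index_ne_zero_of_finite

set_option maxHeartbeats 1000000 in
/-- for t : G → ℤ[1/p] surjective, G finite-rank torsion-free, if G has a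
noncyclic rank-one subgroup H with H ∩ ker t = 0, then ker t ⊕ H has finite index in G
(the extension is nearly split). -/
theorem stmt13 {G : Type*} [AddCommGroup G] [NoZeroSMulDivisors ℤ G]
    (hfr : Module.rank ℚ (ℚ ⊗[ℤ] G) < Cardinal.aleph0)
    (p : ℕ) (hp : p.Prime) (t : G →+ ℚ) (hrange : t.range = zOneOver p)
    (H : AddSubgroup G) (h1 : IsRankOne H)
    (hnc : ¬ ∃ g : G, H = AddSubgroup.closure {g})
    (hdisj : H ⊓ t.ker = ⊥) :
    (t.ker ⊔ H).index ≠ 0 := by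
  have hsup : t.ker ⊔ H = (H.map t).comap t := by
    rw [AddSubgroup.comap_map_eq, sup_comm]
  rw [hsup, AddSubgroup.index_comap, hrange]
  apply key_relindex hp
  · rw [← hrange]
    exact AddSubgroup.map_le_range t H
  · rintro ⟨x, hx⟩
    apply hnc
    have hxmem : x ∈ H.map t := hx ▸ AddSubgroup.subset_closure rfl
    obtain ⟨g, hgH, hgt⟩ := hxmem
    refine ⟨g, ?_⟩
    apply le_antisymm
    · intro h hh
      have : t h ∈ AddSubgroup.closure {x} := hx ▸ AddSubgroup.mem_map_of_mem t hh
      obtain ⟨n, hn⟩ := AddSubgroup.mem_closure_singleton.mp this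
      have hsub : h - n • g ∈ H ⊓ t.ker := by
        refine AddSubgroup.mem_inf.mpr ⟨AddSubgroup.sub_mem H hh (AddSubgroup.zsmul_mem H hgH n), ?_⟩
        rw [AddMonoidHom.mem_ker, map_sub, map_zsmul, hgt, hn, sub_self]
      rw [hdisj] at hsub
      simp only [AddSubgroup.mem_bot, sub_eq_zero] at hsub
      rw [hsub]
      exact AddSubgroup.mem_closure_singleton.mpr ⟨n, rfl⟩
    · rw [AddSubgroup.closure_le]
      exact Set.singleton_subset_iff.mpr hgH
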